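/- arXiv:2205.05398 — 2 statements merged into one kernel-verified Lean document; each statement's English description precedes it below -/
import Mathlib

section
/- Let Z_1, ..., Z_{n+1} be real-valued random variables on a probability space whose joint distribution is exchangeable, i.e., for every permutation π of {1, ..., n+1} the random vector (Z_{π(1)}, ..., Z_{π(n+1)}) has the same law as (Z_1, ..., Z_{n+1}). For k ∈ {1, ..., n}, let Z_{(k)} denote the k-th smallest value among Z_1, ..., Z_n. Then P(Z_{n+1} ≤ Z_{(k)}) ≥ k/(n+1). -/
open MeasureTheory

/-- The `k`-th smallest value (0-indexed) among `v 0, ..., v (n-1)`. -/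
noncomputable def orderStat {n : ℕ} (v : Fin n → ℝ) (k : Fin n) : ℝ :=
  v (Tuple.sort v k)

open Finset

/-- number of entries strictly below `v a` -/
noncomputable def rk {m : ℕ} (v : Fin m → ℝ) (a : Fin m) : ℕ :=
  (Finset.univ.filter fun i => v i < v a).card

lemma card_filter_val_lt {m k : ℕ} (hkm : k ≤ m) :
    (Finset.univ.filter fun j : Fin m => (j : ℕ) < k).card = k := by
  have : (Finset.univ.filter fun j : Fin m => (j : ℕ) < k)
      = Finset.univ.map (Fin.castLEEmb hkm) := by
    ext j
    simp only [mem_filter, mem_univ, true_and, mem_map, Fin.castLEEmb_apply]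
    constructor
    · intro hj
      exact ⟨⟨j, hj⟩, by simp [Fin.ext_iff]⟩
    · rintro ⟨i, rfl⟩
      exact i.2
  rw [this, card_map, card_univ, Fintype.card_fin]

lemma rk_sort_le {m : ℕ} (v : Fin m → ℝ) (j : Fin m) :
    rk v (Tuple.sort v j) ≤ (j : ℕ) := by
  have h := Finset.card_le_card_of_injOn (f := fun i => (Tuple.sort v).symm i)
    (s := Finset.univ.filter fun i => v i < v (Tuple.sort v j))
    (t := Finset.univ.filter fun i : Fin m => (i : ℕ) < (j : ℕ))
    (by
      intro i hi
      simp only [mem_coe, mem_filter, mem_univ, true_and] at hi ⊢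
      by_contra h
      push_neg at h
      have hj : j ≤ (Tuple.sort v).symm i := by
        exact Fin.le_def.mpr h
      have := Tuple.monotone_sort v hj
      simp only [Function.comp_apply, Equiv.apply_symm_apply] at this
      exact absurd (lt_of_le_of_lt this hi) (lt_irrefl _))
    (fun a _ b _ hab => (Tuple.sort v).symm.injective hab)
  rw [card_filter_val_lt j.2.le] at h
  exact h

/-- At least `k` indices have strict rank `< k`. -/
lemma card_rank_lt {m k : ℕ} (v : Fin m → ℝ) (hkm : k ≤ m) :
    k ≤ (Finset.univ.filter fun a : Fin m => rk v a < k).card := by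
  have h := Finset.card_le_card_of_injOn (f := fun j => Tuple.sort v j)
    (s := Finset.univ.filter fun j : Fin m => (j : ℕ) < k)
    (t := Finset.univ.filter fun a : Fin m => rk v a < k)
    (by
      intro j hj
      simp only [mem_coe, mem_filter, mem_univ, true_and] at hj ⊢
      exact lt_of_le_of_lt (rk_sort_le v j) hj)
    (fun a _ b _ hab => (Tuple.sort v).injective hab)
  rwa [card_filter_val_lt hkm] at h

/-- threshold characterization of the order statistic. -/
lemma le_orderStat_iff {m k : ℕ} (w : Fin m → ℝ) (t : ℝ) (hk1 : 1 ≤ k) (hkm : k ≤ m) :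
    t ≤ orderStat w ⟨k - 1, Nat.sub_one_lt_of_le hk1 hkm⟩ ↔
      (Finset.univ.filter fun i => w i < t).card ≤ k - 1 := by
  constructor
  · intro ht
    have hsub : (Finset.univ.filter fun i => w i < t)
        ⊆ Finset.univ.filter fun i => w i < w (Tuple.sort w ⟨k - 1, by omega⟩) := by
      intro i hi
      simp only [mem_filter, mem_univ, true_and] at hi ⊢
      exact lt_of_lt_of_le hi ht
    exact le_trans (Finset.card_le_card hsub) (rk_sort_le w ⟨k - 1, by omega⟩)
  · intro hc
    by_contra ht
    push_neg at ht
    -- all sorted positions `< k` have value `< t`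
    have h := Finset.card_le_card_of_injOn (f := fun j => Tuple.sort w j)
      (s := Finset.univ.filter fun j : Fin m => (j : ℕ) < k)
      (t := Finset.univ.filter fun i => w i < t)
      (by
        intro j hj
        simp only [mem_coe, mem_filter, mem_univ, true_and] at hj ⊢
        have hle : j ≤ (⟨k - 1, by omega⟩ : Fin m) := by
          rw [Fin.le_def]; simpa using Nat.le_sub_one_of_lt hj
        have := Tuple.monotone_sort w hle
        simp only [Function.comp_apply] at this
        exact lt_of_le_of_lt this ht)
      (fun a _ b _ hab => (Tuple.sort w).injective hab)
    rw [card_filter_val_lt hkm] at h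
    omega

lemma card_lt_last {n : ℕ} (v : Fin (n + 1) → ℝ) :
    (Finset.univ.filter fun i : Fin (n + 1) => v i < v (Fin.last n)).card
      = (Finset.univ.filter fun i : Fin n => v i.castSucc < v (Fin.last n)).card := by
  rw [Finset.card_filter, Finset.card_filter, Fin.sum_univ_castSucc]
  simp


/-- If `Z 0, ..., Z n` are exchangeable real-valued random variables, then the probability
that the last one is at most the `k`-th smallest of the first `n` is at least `k / (n + 1)`. -/
theorem exchangeable_rank_bound
    {Ω : Type*} [MeasurableSpace Ω] (P : Measure Ω) [IsProbabilityMeasure P]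
    {n : ℕ} (Z : Fin (n + 1) → Ω → ℝ)
    (hZ : ∀ i, Measurable (Z i))
    (hexch : ∀ π : Equiv.Perm (Fin (n + 1)),
      Measure.map (fun ω (i : Fin (n + 1)) => Z (π i) ω) P
        = Measure.map (fun ω (i : Fin (n + 1)) => Z i ω) P)
    (k : ℕ) (hk1 : 1 ≤ k) (hkn : k ≤ n) :
    P {ω | Z (Fin.last n) ω ≤
        orderStat (fun i : Fin n => Z i.castSucc ω) ⟨k - 1, by omega⟩}
      ≥ (k : ENNReal) / ((n : ENNReal) + 1) := by
  classical
  have hFmeas : Measurable (fun ω (i : Fin (n + 1)) => Z i ω) :=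
    measurable_pi_lambda _ hZ
  have hgmeas : ∀ a : Fin (n + 1), Measurable (fun v : Fin (n + 1) → ℝ => rk v a) := by
    intro a
    have hrw : (fun v : Fin (n + 1) → ℝ => rk v a)
        = fun v => ∑ i : Fin (n + 1), if v i < v a then 1 else 0 := by
      funext v; rw [rk, Finset.card_filter]
    rw [hrw]
    exact Finset.measurable_sum _ fun i _ =>
      Measurable.ite (measurableSet_lt (measurable_pi_apply i) (measurable_pi_apply a))
        measurable_const measurable_const
  set S : Fin (n + 1) → Set (Fin (n + 1) → ℝ) := fun a => {v | rk v a < k} with hS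
  have hSmeas : ∀ a, MeasurableSet (S a) := by
    intro a
    exact (hgmeas a) (MeasurableSet.of_discrete (s := Set.Iio k))
  set A : Fin (n + 1) → Set Ω := fun a => (fun ω (i : Fin (n + 1)) => Z i ω) ⁻¹' S a with hA
  have hAmeas : ∀ a, MeasurableSet (A a) := fun a => hFmeas (hSmeas a)
  have hmem : ∀ a ω, ω ∈ A a ↔ rk (fun i => Z i ω) a < k := fun a ω => Iff.rfl
  -- all A a have the same measure
  have heq : ∀ a, P (A a) = P (A (Fin.last n)) := by
    intro a
    set π := Equiv.swap a (Fin.last n) with hπ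
    have hπmeas : Measurable (fun ω (i : Fin (n + 1)) => Z (π i) ω) :=
      measurable_pi_lambda _ fun i => hZ (π i)
    have h1 := congrArg (fun μ : Measure (Fin (n + 1) → ℝ) => μ (S (Fin.last n))) (hexch π)
    rw [Measure.map_apply hπmeas (hSmeas _), Measure.map_apply hFmeas (hSmeas _)] at h1
    have h2 : (fun ω (i : Fin (n + 1)) => Z (π i) ω) ⁻¹' S (Fin.last n) = A a := by
      ext ω
      simp only [Set.mem_preimage, hS, Set.mem_setOf_eq, hA]
      have hπlast : π (Fin.last n) = a := Equiv.swap_apply_right a (Fin.last n)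
      have hcard : rk (fun i => Z (π i) ω) (Fin.last n) = rk (fun i => Z i ω) a := by
        unfold rk
        simp only [hπlast]
        apply Finset.card_bij (fun i _ => π i)
        · intro i hi
          simp only [mem_filter, mem_univ, true_and] at hi ⊢
          exact hi
        · intro i _ j _ hij
          exact π.injective hij
        · intro j hj
          refine ⟨π.symm j, ?_, by simp⟩
          simp only [mem_filter, mem_univ, true_and] at hj ⊢
          simpa using hj
      rw [hcard]
    rw [h2] at h1
    exact h1
  -- pointwise count bound
  have hpt : ∀ ω, (k : ENNReal) ≤ ∑ a : Fin (n + 1), (A a).indicator (fun _ => (1 : ENNReal)) ω := by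
    intro ω
    have hcard := card_rank_lt (fun i => Z i ω) (show k ≤ n + 1 by omega)
    have hsum : ∑ a : Fin (n + 1), (A a).indicator (fun _ => (1 : ENNReal)) ω
        = ((Finset.univ.filter fun a : Fin (n + 1) => rk (fun i => Z i ω) a < k).card : ENNReal) := by
      rw [Finset.card_filter]
      push_cast
      apply Finset.sum_congr rfl
      intro a _
      rw [Set.indicator_apply]
      by_cases h : rk (fun i => Z i ω) a < k
      · rw [if_pos ((hmem a ω).mpr h), if_pos h]
      · rw [if_neg (fun hc => h ((hmem a ω).mp hc)), if_neg h]
    rw [hsum]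
    exact_mod_cast Nat.cast_le.mpr hcard
  -- sum of measures
  have hsum : (k : ENNReal) ≤ ∑ a : Fin (n + 1), P (A a) := by
    have h1 : ∑ a : Fin (n + 1), P (A a)
        = ∫⁻ ω, ∑ a : Fin (n + 1), (A a).indicator (fun _ => (1 : ENNReal)) ω ∂P := by
      rw [lintegral_finset_sum _ (fun a _ => (Measurable.indicator (measurable_const : Measurable fun _ : Ω => (1:ENNReal))) (hAmeas a))]
      apply Finset.sum_congr rfl
      intro a _
      rw [lintegral_indicator (hAmeas a)]
      simp
    rw [h1]
    calc (k : ENNReal) = ∫⁻ _, (k : ENNReal) ∂P := by simp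
      _ ≤ _ := lintegral_mono hpt
  have hconst : ∑ a : Fin (n + 1), P (A a) = ((n : ENNReal) + 1) * P (A (Fin.last n)) := by
    rw [Finset.sum_congr rfl (fun a _ => heq a), Finset.sum_const, card_univ, Fintype.card_fin,
      nsmul_eq_mul]
    push_cast
    ring
  rw [hconst] at hsum
  -- identify the target set
  have hset : {ω | Z (Fin.last n) ω ≤
      orderStat (fun i : Fin n => Z i.castSucc ω) ⟨k - 1, by omega⟩} = A (Fin.last n) := by
    ext ω
    rw [Set.mem_setOf_eq, le_orderStat_iff _ _ hk1 hkn, hmem]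
    unfold rk
    rw [show (fun i : Fin (n + 1) => Z i ω) (Fin.last n) = Z (Fin.last n) ω from rfl]
    rw [card_lt_last (fun i => Z i ω)]
    omega
  have hne0 : (n : ENNReal) + 1 ≠ 0 := by simp
  have hnetop : (n : ENNReal) + 1 ≠ ⊤ := by
    simp [ENNReal.add_ne_top, ENNReal.natCast_ne_top]
  rw [hset]
  rw [ge_iff_le, ENNReal.div_le_iff_le_mul (Or.inl hne0) (Or.inl hnetop)]
  rw [mul_comm] at hsum
  exact hsum
end

section
/- Inductive Conformal Prediction coverage guarantee: let (X_1, Y_1), ..., (X_{n+1}, Y_{n+1}) be i.i.d. random pairs with values in a measurable space Θ × [0,1], and let f : Θ → ℝ be a fixed measurable function (a deterministic predictor chosen independently of these pairs). Define the nonconformity scores V_i = |Y_i − f(X_i)| for i = 1, ..., n+1. Fix ε ∈ (0,1) with ⌈(n+1)(1−ε)⌉ ≤ n, and let τ_ε be the ⌈(n+1)(1−ε)⌉-th smallest value among V_1, ..., V_n (the calibration scores). Then P(|Y_{n+1} − f(X_{n+1})| ≤ τ_ε) ≥ 1 − ε. -/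
open MeasureTheory ProbabilityTheory

namespace ICP

variable {N : ℕ}

/-- Number of indices `i` with `v j ≤ v i`. -/
noncomputable def cnt (j : Fin N) (v : Fin N → ℝ) : ℕ :=
  (Finset.univ.filter fun i => v j ≤ v i).card

lemma measurable_cnt (j : Fin N) : Measurable (cnt j) := by
  unfold cnt
  simp_rw [Finset.card_filter]
  exact Finset.measurable_sum _ fun i _ => Measurable.ite
    (measurableSet_le (measurable_pi_apply j) (measurable_pi_apply i))
    measurable_const measurable_const

lemma cnt_comp (e : Equiv.Perm (Fin N)) (v : Fin N → ℝ) (j : Fin N) :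
    cnt j (v ∘ e) = cnt (e j) v := by
  unfold cnt
  exact Finset.card_equiv e (fun i => by simp)

lemma cnt_le_det (m : ℕ) (v : Fin N → ℝ) :
    (Finset.univ.filter fun j => cnt j v ≤ m).card ≤ m := by
  classical
  set S := Finset.univ.filter fun j => cnt j v ≤ m with hS
  rcases S.eq_empty_or_nonempty with h | h
  · simp [h]
  · obtain ⟨j, hjS, hjmin⟩ := S.exists_min_image v h
    have hsub : S ⊆ Finset.univ.filter fun i => v j ≤ v i := fun i hi =>
      Finset.mem_filter.mpr ⟨Finset.mem_univ _, hjmin i hi⟩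
    calc S.card ≤ cnt j v := Finset.card_le_card hsub
    _ ≤ m := (Finset.mem_filter.mp hjS).2

lemma joint_law {Ω : Type*} [MeasurableSpace Ω] (P : Measure Ω) [IsProbabilityMeasure P]
    (V : Fin N → Ω → ℝ) (hV : ∀ i, Measurable (V i))
    (hind : iIndepFun V P)
    (ν : Measure ℝ) [IsProbabilityMeasure ν] (hid : ∀ i, P.map (V i) = ν) :
    P.map (fun ω i => V i ω) = Measure.pi (fun _ : Fin N => ν) := by
  refine (Measure.pi_eq fun s hs => ?_).symm
  rw [Measure.map_apply (measurable_pi_lambda _ hV) (MeasurableSet.univ_pi hs)]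
  have hpre : (fun ω i => V i ω) ⁻¹' (Set.pi Set.univ s) = ⋂ i ∈ Finset.univ, V i ⁻¹' s i := by
    ext ω; simp [Set.mem_pi]
  rw [hpre, hind.measure_inter_preimage_eq_mul Finset.univ (fun i _ => hs i)]
  refine Finset.prod_congr rfl fun i _ => ?_
  rw [← hid i, Measure.map_apply (hV i) (hs i)]

lemma perm_invariant (ν : Measure ℝ) [IsProbabilityMeasure ν] (e : Equiv.Perm (Fin N))
    {B : Set (Fin N → ℝ)} (hB : MeasurableSet B) :
    (Measure.pi fun _ : Fin N => ν) ((fun v => v ∘ e) ⁻¹' B)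
      = (Measure.pi fun _ : Fin N => ν) B := by
  have hT : ⇑(MeasurableEquiv.piCongrLeft (fun _ : Fin N => ℝ) e.symm)
      = fun v : Fin N → ℝ => v ∘ e := by
    funext v
    funext b
    have := MeasurableEquiv.piCongrLeft_apply_apply e.symm (β := fun _ : Fin N => ℝ) v (e b)
    simpa using this
  have hmp := MeasureTheory.measurePreserving_piCongrLeft (fun _ : Fin N => ν) e.symm
  have := hmp.measure_preimage hB.nullMeasurableSet
  rw [hT] at this
  simpa using this

/-- Main probabilistic bound: the probability that at most `m` of the `N` i.i.d. scores
are `≥` the last one is at most `m / N`. -/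
lemma main_bound {Ω : Type*} [MeasurableSpace Ω] (P : Measure Ω) [IsProbabilityMeasure P]
    (V : Fin N → Ω → ℝ) (hV : ∀ i, Measurable (V i))
    (hind : iIndepFun V P)
    (ν : Measure ℝ) [IsProbabilityMeasure ν] (hid : ∀ i, P.map (V i) = ν)
    (m : ℕ) (j₀ : Fin N) :
    P {ω | cnt j₀ (fun i => V i ω) ≤ m} ≤ (m : ENNReal) / (N : ENNReal) := by
  classical
  set B : Fin N → Set (Fin N → ℝ) := fun j => {v | cnt j v ≤ m} with hBdef
  have hBmeas : ∀ j, MeasurableSet (B j) := fun j =>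
    (measurable_cnt j) (MeasurableSet.of_discrete (s := {t : ℕ | t ≤ m}))
  set MP : Measure (Fin N → ℝ) := Measure.pi (fun _ : Fin N => ν) with hMP
  have hmap : Measure.map (fun ω i => V i ω) P = MP := joint_law P V hV hind ν hid
  have hPA : P {ω | cnt j₀ (fun i => V i ω) ≤ m} = MP (B j₀) := by
    have : {ω | cnt j₀ (fun i => V i ω) ≤ m} = (fun ω i => V i ω) ⁻¹' (B j₀) := rfl
    rw [this, ← Measure.map_apply (measurable_pi_lambda _ hV) (hBmeas j₀), hmap]
  -- all B j have the same PP-measure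
  have hsame : ∀ j, MP (B j) = MP (B j₀) := by
    intro j
    have hpre : B j = (fun v : Fin N → ℝ => v ∘ (Equiv.swap j₀ j)) ⁻¹' (B j₀) := by
      ext v
      simp only [hBdef, Set.mem_setOf_eq, Set.mem_preimage]
      rw [cnt_comp (Equiv.swap j₀ j) v j₀, Equiv.swap_apply_left]
    rw [hpre, hMP, perm_invariant ν (Equiv.swap j₀ j) (hBmeas j₀)]
  -- sum of measures is at most m
  have hsum : ∑ j : Fin N, MP (B j) ≤ (m : ENNReal) := by
    have h1 : ∀ j : Fin N, MP (B j) = ∫⁻ v, (B j).indicator (fun _ => (1 : ENNReal)) v ∂MP :=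
      fun j => (lintegral_indicator_one (hBmeas j)).symm
    calc ∑ j : Fin N, MP (B j)
        = ∫⁻ v, ∑ j : Fin N, (B j).indicator (fun _ => (1 : ENNReal)) v ∂MP := by
          rw [lintegral_finset_sum]
          · exact Finset.sum_congr rfl fun j _ => h1 j
          · exact fun j _ => (measurable_const.indicator (hBmeas j))
      _ ≤ ∫⁻ _, (m : ENNReal) ∂MP := by
          refine lintegral_mono fun v => ?_
          have : ∑ j : Fin N, (B j).indicator (fun _ => (1 : ENNReal)) v
              = ((Finset.univ.filter fun j => cnt j v ≤ m).card : ENNReal) := by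
            rw [Finset.card_filter]
            push_cast
            refine Finset.sum_congr rfl fun j _ => ?_
            by_cases h : cnt j v ≤ m
            · simp [Set.indicator_of_mem, hBdef, h]
            · simp [Set.indicator_of_notMem, hBdef, h]
          rw [this]
          exact Nat.cast_le.mpr (cnt_le_det m v)
      _ = (m : ENNReal) := by simp
  have hNsum : (N : ENNReal) * MP (B j₀) ≤ (m : ENNReal) := by
    calc (N : ENNReal) * MP (B j₀) = ∑ _j : Fin N, MP (B j₀) := by
          simp [Finset.sum_const, mul_comm]
      _ = ∑ j : Fin N, MP (B j) := (Finset.sum_congr rfl fun j _ => (hsame j).symm)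
      _ ≤ (m : ENNReal) := hsum
  rw [hPA]
  rcases Nat.eq_zero_or_pos N with h0 | h0
  · exact absurd j₀.2 (by omega)
  · rw [ENNReal.le_div_iff_mul_le (Or.inl (by exact_mod_cast h0.ne')) (Or.inl (ENNReal.natCast_ne_top N))]
    rw [mul_comm]
    exact hNsum


end ICP

/-- Inductive Conformal Prediction coverage guarantee: for i.i.d. pairs
`(X i, Y i)` with `Y i ∈ [0,1]`, a fixed measurable predictor `f`, nonconformity scores
`V i = |Y i - f (X i)|`, and `τ_ε` the `⌈(n+1)(1-ε)⌉`-th smallest of the first `n` scores,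
the probability that `|Y (n+1) - f (X (n+1))| ≤ τ_ε` is at least `1 - ε`. -/
theorem icp_coverage
    {Ω Θ : Type*} [MeasurableSpace Ω] [MeasurableSpace Θ]
    (P : Measure Ω) [IsProbabilityMeasure P]
    {n : ℕ} (X : Fin (n + 1) → Ω → Θ) (Y : Fin (n + 1) → Ω → ℝ)
    (hX : ∀ i, Measurable (X i)) (hY : ∀ i, Measurable (Y i))
    (hY01 : ∀ i ω, Y i ω ∈ Set.Icc (0 : ℝ) 1)
    (μ : Measure (Θ × ℝ))
    (hident : ∀ i, Measure.map (fun ω => (X i ω, Y i ω)) P = μ)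
    (hindep : iIndepFun
      (fun i ω => (X i ω, Y i ω)) P)
    (f : Θ → ℝ) (hf : Measurable f)
    (ε : ℝ) (hε : ε ∈ Set.Ioo (0 : ℝ) 1)
    (hm : ⌈((n : ℝ) + 1) * (1 - ε)⌉₊ ≤ n) :
    P {ω | |Y (Fin.last n) ω - f (X (Fin.last n) ω)| ≤
        orderStat (fun i : Fin n => |Y i.castSucc ω - f (X i.castSucc ω)|)
          ⟨⌈((n : ℝ) + 1) * (1 - ε)⌉₊ - 1, by
            have h1 : 0 < ⌈((n : ℝ) + 1) * (1 - ε)⌉₊ :=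
              Nat.ceil_pos.mpr (by nlinarith [hε.1, hε.2, Nat.cast_nonneg (α := ℝ) n])
            omega⟩}
      ≥ ENNReal.ofReal (1 - ε) := by
  classical
  set K := ⌈((n : ℝ) + 1) * (1 - ε)⌉₊ with hKdef
  have hK1 : 1 ≤ K :=
    Nat.ceil_pos.mpr (by nlinarith [hε.1, hε.2, Nat.cast_nonneg (α := ℝ) n])
  set g : Θ × ℝ → ℝ := fun p => |p.2 - f p.1| with hgdef
  have hgm : Measurable g := (measurable_snd.sub (hf.comp measurable_fst)).abs
  set V : Fin (n + 1) → Ω → ℝ := fun i ω => |Y i ω - f (X i ω)| with hVdef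
  have hVm : ∀ i, Measurable (V i) := fun i => ((hY i).sub (hf.comp (hX i))).abs
  have hVind : iIndepFun V P :=
    hindep.comp (fun _ => g) (fun _ => hgm)
  haveI : IsProbabilityMeasure μ := by
    rw [← hident 0]
    exact Measure.isProbabilityMeasure_map ((hX 0).prodMk (hY 0)).aemeasurable
  set ν : Measure ℝ := μ.map g with hνdef
  haveI : IsProbabilityMeasure ν := Measure.isProbabilityMeasure_map hgm.aemeasurable
  have hVid : ∀ i, P.map (V i) = ν := by
    intro i
    rw [hνdef, ← hident i, Measure.map_map hgm ((hX i).prodMk (hY i))]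
    rfl
  set m := n + 1 - K with hmdef
  have hbound := ICP.main_bound P V hVm hVind ν hVid m (Fin.last n)
  -- the numeric bound m/(n+1) ≤ ε
  have hdiv : ((m : ℕ) : ENNReal) / (((n + 1 : ℕ)) : ENNReal) ≤ ENNReal.ofReal ε := by
    have hKle : ((n : ℝ) + 1) * (1 - ε) ≤ (K : ℝ) := Nat.le_ceil _
    have hmr : (m : ℝ) = ((n : ℝ) + 1) - (K : ℝ) := by
      rw [hmdef]
      push_cast [Nat.cast_sub (by omega : K ≤ n + 1)]
      ring
    have hle : (m : ℝ) / ((n : ℝ) + 1) ≤ ε := by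
      rw [div_le_iff₀ (by positivity)]
      nlinarith [hε.1, hε.2]
    have heq : ((m : ℕ) : ENNReal) / (((n + 1 : ℕ)) : ENNReal)
        = ENNReal.ofReal ((m : ℝ) / ((n + 1 : ℕ) : ℝ)) := by
      rw [ENNReal.ofReal_div_of_pos (by positivity), ENNReal.ofReal_natCast,
        ENNReal.ofReal_natCast]
    rw [heq]
    apply ENNReal.ofReal_le_ofReal
    push_cast
    exact hle
  set A := {ω | ICP.cnt (Fin.last n) (fun i => V i ω) ≤ m} with hAdef
  have hAmeas : MeasurableSet A :=
    ((ICP.measurable_cnt (Fin.last n)).comp (measurable_pi_lambda _ hVm))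
      (MeasurableSet.of_discrete (s := {t : ℕ | t ≤ m}))
  have hPA : P A ≤ ENNReal.ofReal ε := le_trans hbound hdiv
  -- the deterministic inclusion
  have hsubset : Aᶜ ⊆ {ω | |Y (Fin.last n) ω - f (X (Fin.last n) ω)| ≤
      orderStat (fun i : Fin n => |Y i.castSucc ω - f (X i.castSucc ω)|)
        ⟨K - 1, by omega⟩} := by
    intro ω hω
    simp only [hAdef, Set.mem_compl_iff, Set.mem_setOf_eq, not_le] at hω
    by_contra hcon
    simp only [Set.mem_setOf_eq, not_le] at hcon
    set w : Fin n → ℝ := fun i : Fin n => |Y i.castSucc ω - f (X i.castSucc ω)| with hwdef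
    have hcon' : w (Tuple.sort w ⟨K - 1, by omega⟩) < V (Fin.last n) ω := hcon
    -- at least K of the first n scores are < V last
    have hstep1 : K ≤ (Finset.univ.filter fun j : Fin n =>
        ¬ (V (Fin.last n) ω ≤ w j)).card := by
      have := Finset.card_le_card_of_injOn
        (f := fun q : Fin K => Tuple.sort w ⟨q.1, lt_of_lt_of_le q.2 hm⟩)
        (s := (Finset.univ : Finset (Fin K)))
        (t := Finset.univ.filter fun j : Fin n => ¬ (V (Fin.last n) ω ≤ w j))
        (fun q _ => by
          refine Finset.mem_filter.mpr ⟨Finset.mem_univ _, not_le.mpr ?_⟩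
          refine lt_of_le_of_lt ?_ hcon'
          exact Tuple.monotone_sort w (by
            show (⟨q.1, lt_of_lt_of_le q.2 hm⟩ : Fin n) ≤ ⟨K - 1, by omega⟩
            rw [Fin.mk_le_mk]
            omega))
        (fun a _ b _ hab => by
          have h' := (Tuple.sort w).injective hab
          simp only [Fin.mk.injEq] at h'
          exact Fin.ext h')
      simpa using this
    have hstep2 : (Finset.univ.filter fun j : Fin n =>
        V (Fin.last n) ω ≤ w j).card ≤ n - K := by
      have hsplit := Finset.card_filter_add_card_filter_not
        (s := (Finset.univ : Finset (Fin n)))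
        (p := fun j : Fin n => V (Fin.last n) ω ≤ w j)
      simp only [Finset.card_univ, Fintype.card_fin] at hsplit
      omega
    -- bound the count over Fin (n+1)
    have hsub : (Finset.univ.filter fun i : Fin (n + 1) =>
        V (Fin.last n) ω ≤ V i ω) ⊆ insert (Fin.last n)
        ((Finset.univ.filter fun j : Fin n =>
          V (Fin.last n) ω ≤ w j).image Fin.castSucc) := by
      intro i hi
      rcases eq_or_ne i (Fin.last n) with rfl | hne
      · exact Finset.mem_insert_self _ _
      · refine Finset.mem_insert_of_mem (Finset.mem_image.mpr
          ⟨i.castPred hne, ?_, Fin.castSucc_castPred i hne⟩)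
        refine Finset.mem_filter.mpr ⟨Finset.mem_univ _, ?_⟩
        have hQ : V (Fin.last n) ω ≤ V i ω := (Finset.mem_filter.mp hi).2
        have : w (i.castPred hne) = V i ω := by
          show V ((i.castPred hne).castSucc) ω = V i ω
          rw [Fin.castSucc_castPred]
        rw [this]
        exact hQ
    have hcard : (Finset.univ.filter fun i : Fin (n + 1) =>
        V (Fin.last n) ω ≤ V i ω).card ≤ m := by
      calc (Finset.univ.filter fun i : Fin (n + 1) =>
            V (Fin.last n) ω ≤ V i ω).card
          ≤ (insert (Fin.last n) ((Finset.univ.filter fun j : Fin n =>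
              V (Fin.last n) ω ≤ w j).image Fin.castSucc)).card :=
            Finset.card_le_card hsub
        _ ≤ ((Finset.univ.filter fun j : Fin n =>
              V (Fin.last n) ω ≤ w j).image Fin.castSucc).card + 1 :=
            Finset.card_insert_le _ _
        _ ≤ (Finset.univ.filter fun j : Fin n =>
              V (Fin.last n) ω ≤ w j).card + 1 :=
            Nat.add_le_add_right (Finset.card_image_le) 1
        _ ≤ (n - K) + 1 := Nat.add_le_add_right hstep2 1
        _ ≤ m := by omega
    exact absurd hcard (not_le.mpr hω)
  calc ENNReal.ofReal (1 - ε) = 1 - ENNReal.ofReal ε := by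
        rw [ENNReal.ofReal_sub _ hε.1.le, ENNReal.ofReal_one]
    _ ≤ 1 - P A := tsub_le_tsub_left hPA 1
    _ = P Aᶜ := (prob_compl_eq_one_sub hAmeas).symm
    _ ≤ _ := measure_mono hsubset
end
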